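/- (Boundedness of the ACI iterates.) Let α ∈ (0,1), γ > 0, α_1 ∈ [0,1], and let err_t ∈ {0,1} satisfy: err_t = 0 whenever α_t ≤ 0, and err_t = 1 whenever α_t ≥ 1. Then the recursion α_{t+1} = α_t + γ(α - err_t) satisfies α_t ∈ [-γ, 1+γ] for all t ≥ 1. -/
import Mathlib


theorem stmt8 (α γ : ℝ) (hα : α ∈ Set.Ioo (0 : ℝ) 1) (hγ : 0 < γ)
    (a : ℕ → ℝ) (err : ℕ → ℝ)
    (herr : ∀ t, 1 ≤ t → err t = 0 ∨ err t = 1)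
    (ha1 : a 1 ∈ Set.Icc (0 : ℝ) 1)
    (herr0 : ∀ t, 1 ≤ t → a t ≤ 0 → err t = 0)
    (herr1 : ∀ t, 1 ≤ t → 1 ≤ a t → err t = 1)
    (hrec : ∀ t, 1 ≤ t → a (t + 1) = a t + γ * (α - err t)) :
    ∀ t, 1 ≤ t → a t ∈ Set.Icc (-γ) (1 + γ) := by
  obtain ⟨hα0, hα1⟩ := hα
  intro t ht
  induction t, ht using Nat.le_induction with
  | base =>
    exact ⟨le_trans (by linarith) ha1.1, le_trans ha1.2 (by linarith)⟩
  | succ n hn ih =>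
    obtain ⟨il, iu⟩ := ih
    rw [hrec n hn]
    rcases le_or_gt (a n) 0 with h0 | h0
    · rw [herr0 n hn h0]
      constructor <;> nlinarith
    · rcases le_or_gt 1 (a n) with h1 | h1
      · rw [herr1 n hn h1]
        constructor <;> nlinarith
      · rcases herr n hn with he | he <;> rw [he] <;>
          constructor <;> nlinarith
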